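/- arXiv:2105.09922 — 2 statements merged into one kernel-verified Lean document; each statement's English description precedes it below -/
import Mathlib

section
/- For one-dimensional polygonal curves, the discrete Fréchet distance between the two-point curve ⟨1.5, 0.5⟩ and the curve ⟨2.5, −0.5, 0.5, −0.5, 0.5, …, −0.5, 0.5⟩ (starting at 2.5, followed by m alternating pairs −0.5, 0.5) equals 1 for any m ≥ 1. -/
/-- A legal step of a monotone coupling: each index stays or advances by one,
and at least one index advances. -/
def CouplingStep (a b : ℕ × ℕ) : Prop :=
  (b.1 = a.1 ∨ b.1 = a.1 + 1) ∧ (b.2 = a.2 ∨ b.2 = a.2 + 1) ∧ b ≠ a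

/-- A monotone coupling between sequences of lengths `m` and `n` (0-based indices):
it starts at (0,0), ends at (m-1, n-1), and advances by legal steps. -/
def IsCoupling (m n : ℕ) (c : List (ℕ × ℕ)) : Prop :=
  c.head? = some (0, 0) ∧ c.getLast? = some (m - 1, n - 1) ∧ List.Chain' CouplingStep c

/-- The cost of a coupling: the maximum distance over coupled pairs. -/
noncomputable def couplingCost {X : Type*} [PseudoMetricSpace X]
    (p q : ℕ → X) (c : List (ℕ × ℕ)) : ℝ :=
  (c.map fun ij => dist (p ij.1) (q ij.2)).foldr max 0

/-- The discrete Fréchet distance between the sequences `p 0, …, p (m-1)` and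
`q 0, …, q (n-1)`: the infimum of coupling costs over all monotone couplings. -/
noncomputable def dDF {X : Type*} [PseudoMetricSpace X] (m n : ℕ) (p q : ℕ → X) : ℝ :=
  sInf {r | ∃ c, IsCoupling m n c ∧ couplingCost p q c = r}

lemma my_le_foldr_max {l : List ℝ} {x : ℝ} (hx : x ∈ l) : x ≤ l.foldr max 0 := by
  induction l with
  | nil => simp at hx
  | cons a t ih =>
    rcases List.mem_cons.1 hx with h | h
    · simp [h, le_max_iff]
    · simpa using Or.inr (ih h)

lemma my_foldr_max_le {l : List ℝ} {b : ℝ} (hb : 0 ≤ b) (h : ∀ x ∈ l, x ≤ b) :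
    l.foldr max 0 ≤ b := by
  induction l with
  | nil => simpa
  | cons a t ih =>
    simp only [List.foldr_cons, max_le_iff]
    exact ⟨h a (by simp), ih fun x hx => h x (List.mem_cons_of_mem _ hx)⟩

def myc (n : ℕ) : List (ℕ × ℕ) := (0,0) :: (List.range' 1 n).map (fun i => (1, i))

lemma myc_succ (n : ℕ) : myc (n+1) = myc n ++ [(1, n+1)] := by
  simp [myc, List.range'_concat, Nat.add_comm]

lemma myc_chain_last (n : ℕ) :
    List.Chain' CouplingStep (myc n) ∧
      (myc n).getLast? = some (if n = 0 then (0,0) else (1,n)) := by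
  induction n with
  | zero => simp [myc, List.Chain']
  | succ k ih =>
    rw [myc_succ]
    constructor
    · unfold List.Chain'; rw [List.isChain_append]
      refine ⟨ih.1, by simp, ?_⟩
      intro x hx y hy
      rw [ih.2] at hx
      simp at hx hy
      subst hx; subst hy
      by_cases hk : k = 0 <;>
        simp [hk, CouplingStep, Prod.ext_iff]
    · rw [List.getLast?_concat]; simp


/-- The discrete Fréchet distance between ⟨1.5, 0.5⟩ and
⟨2.5, −0.5, 0.5, −0.5, 0.5, …, −0.5, 0.5⟩ (2.5 followed by m alternating pairs) equals 1. -/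
theorem dDF_abs2_abs (m : ℕ) (hm : 1 ≤ m) :
    dDF 2 (2 * m + 1)
      (fun k => if k = 0 then (1.5 : ℝ) else 0.5)
      (fun k => if k = 0 then (2.5 : ℝ) else if k % 2 = 1 then -0.5 else 0.5) = 1 := by
  set p : ℕ → ℝ := fun k => if k = 0 then (1.5 : ℝ) else 0.5 with hp
  set q : ℕ → ℝ := fun k => if k = 0 then (2.5 : ℝ) else if k % 2 = 1 then -0.5 else 0.5 with hq
  have hd00 : dist (p 0) (q 0) = 1 := by
    simp [hp, hq, Real.dist_eq]; norm_num
  have hd1 : ∀ j, 1 ≤ j → dist (p 1) (q j) ≤ 1 := by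
    intro j hj
    have hj0 : j ≠ 0 := by omega
    by_cases h2 : j % 2 = 1 <;> simp [hp, hq, hj0, h2, Real.dist_eq] <;> norm_num
  set S : Set ℝ := {r | ∃ c, IsCoupling 2 (2*m+1) c ∧ couplingCost p q c = r} with hS
  have hmem : (1:ℝ) ∈ S := by
    refine ⟨myc (2*m), ⟨rfl, ?_, (myc_chain_last (2*m)).1⟩, ?_⟩
    · rw [(myc_chain_last (2*m)).2]
      have : 2*m ≠ 0 := by omega
      simp [this]
    · unfold couplingCost
      apply le_antisymm
      · apply my_foldr_max_le zero_le_one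
        intro x hx
        simp only [List.mem_map] at hx
        obtain ⟨ij, hij, rfl⟩ := hx
        rcases List.mem_cons.1 hij with h | h
        · subst h; rw [hd00]
        · simp only [List.mem_map, List.mem_range'] at h
          obtain ⟨i, hi, rfl⟩ := h
          exact hd1 i (by omega)
      · refine my_le_foldr_max ?_
        rw [← hd00]
        exact List.mem_map_of_mem List.mem_cons_self
  have hlb : ∀ r ∈ S, (1:ℝ) ≤ r := by
    rintro r ⟨c, ⟨hhead, _, _⟩, rfl⟩
    have h00 : (0,0) ∈ c := by
      cases c with
      | nil => simp at hhead
      | cons a t => simp_all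
    calc (1:ℝ) = dist (p 0) (q 0) := hd00.symm
      _ ≤ couplingCost p q c := my_le_foldr_max (List.mem_map_of_mem h00)
  exact le_antisymm (csInf_le ⟨1, hlb⟩ hmem) (le_csInf ⟨1, hmem⟩ hlb)
end

section
/- Let π be a 1D polygonal curve and let ĝ(π) be its growing curve, the sequence of local minima and maxima of the subsequence ⟨π(i) : π(i) ∉ Im(π|_{[1,i)})⟩. Then in ĝ(π), the subsequence of local maxima is strictly increasing and the subsequence of local minima is strictly decreasing, and consecutive vertices of ĝ(π) alternate between local minima and maxima. -/
/-- Keep those vertices that strictly extend the range `[lo, hi]` attained so far. -/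
noncomputable def growAux : ℝ → ℝ → List ℝ → List ℝ
  | _, _, [] => []
  | lo, hi, x :: xs =>
    if x < lo ∨ hi < x then x :: growAux (min lo x) (max hi x) xs
    else growAux lo hi xs

/-- Keep only the local minima and maxima: drop middle vertices of monotone triples. -/
noncomputable def collapse : List ℝ → List ℝ
  | a :: b :: c :: rest =>
    if (a < b ∧ b < c) ∨ (c < b ∧ b < a) then collapse (a :: c :: rest)
    else a :: collapse (b :: c :: rest)
  | l => l
termination_by l => l.length
decreasing_by all_goals simp

/-- The growing curve of a 1D polygonal curve: the alternating local extrema of the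
subsequence of vertices that strictly extend the range attained so far. -/
noncomputable def grow : List ℝ → List ℝ
  | [] => []
  | x :: xs => collapse (x :: growAux x x xs)

/-- Each element of the list strictly extends the range attained so far. -/
def ExtP : ℝ → ℝ → List ℝ → Prop
  | _, _, [] => True
  | lo, hi, x :: xs => (x < lo ∨ hi < x) ∧ ExtP (min lo x) (max hi x) xs

lemma growAux_nil (lo hi : ℝ) : growAux lo hi [] = [] := by rw [growAux.eq_def]

lemma growAux_cons (lo hi x : ℝ) (xs : List ℝ) :
    growAux lo hi (x :: xs) =
      if x < lo ∨ hi < x then x :: growAux (min lo x) (max hi x) xs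
      else growAux lo hi xs := by rw [growAux.eq_def]

lemma collapse_nil : collapse [] = [] := by rw [collapse.eq_def]
lemma collapse_one (a : ℝ) : collapse [a] = [a] := by rw [collapse.eq_def]
lemma collapse_two (a b : ℝ) : collapse [a, b] = [a, b] := by rw [collapse.eq_def]
lemma collapse_cons (a b c : ℝ) (r : List ℝ) :
    collapse (a :: b :: c :: r) =
      if (a < b ∧ b < c) ∨ (c < b ∧ b < a) then collapse (a :: c :: r)
      else a :: collapse (b :: c :: r) := by rw [collapse.eq_def]

lemma ext_growAux : ∀ (l : List ℝ) (lo hi : ℝ), ExtP lo hi (growAux lo hi l)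
  | [], lo, hi => by rw [growAux_nil]; trivial
  | x :: xs, lo, hi => by
    rw [growAux_cons]
    by_cases h : x < lo ∨ hi < x
    · simp only [if_pos h]
      exact ⟨h, ext_growAux xs _ _⟩
    · simp only [if_neg h]
      exact ext_growAux xs lo hi

lemma ext_mono : ∀ (l : List ℝ) (lo hi lo' hi' : ℝ), lo ≤ lo' → hi' ≤ hi →
    ExtP lo hi l → ExtP lo' hi' l
  | [], _, _, _, _, _, _, _ => trivial
  | x :: xs, lo, hi, lo', hi', h1, h2, h => by
    refine ⟨?_, ext_mono xs _ _ _ _ (min_le_min h1 le_rfl) (max_le_max h2 le_rfl) h.2⟩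
    rcases h.1 with h' | h'
    · exact Or.inl (lt_of_lt_of_le h' h1)
    · exact Or.inr (lt_of_le_of_lt h2 h')

lemma ext_sublist {l' l : List ℝ} (hs : List.Sublist l' l) :
    ∀ lo hi, ExtP lo hi l → ExtP lo hi l' := by
  induction hs with
  | slnil => intro _ _ _; trivial
  | cons x hs ih =>
    intro lo hi h
    exact ext_mono _ _ _ _ _ (min_le_left _ _) (le_max_left _ _) (ih _ _ h.2)
  | cons_cons x hs ih =>
    intro lo hi h
    exact ⟨h.1, ih _ _ h.2⟩

lemma collapse_second : ∀ (r : List ℝ) (b c : ℝ), ∃ d t,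
    collapse (b :: c :: r) = b :: d :: t ∧ (c ≤ b → d ≤ c) ∧ (b ≤ c → c ≤ d)
  | [], b, c => ⟨c, [], by rw [collapse_two], fun _ => le_rfl, fun _ => le_rfl⟩
  | e :: r', b, c => by
    rw [collapse_cons]
    by_cases h : (b < c ∧ c < e) ∨ (e < c ∧ c < b)
    · simp only [if_pos h]
      obtain ⟨d, t, heq, h1, h2⟩ := collapse_second r' b e
      refine ⟨d, t, heq, ?_, ?_⟩
      · intro hcb
        rcases h with ⟨h3, _⟩ | ⟨h3, h4⟩
        · exact absurd hcb (not_le.mpr h3)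
        · exact le_trans (h1 (h3.trans h4).le) h3.le
      · intro hbc
        rcases h with ⟨h3, h4⟩ | ⟨_, h4⟩
        · exact le_trans h4.le (h2 (h3.trans h4).le)
        · exact absurd hbc (not_le.mpr h4)
    · simp only [if_neg h]
      obtain ⟨d', t', heq, _, _⟩ := collapse_second r' c e
      exact ⟨c, d' :: t', by rw [heq], fun _ => le_rfl, fun _ => le_rfl⟩
termination_by r => r.length
decreasing_by all_goals simp

/-- Alternating list: adjacent distinct, triples zigzag strictly outward. -/
inductive Alt : List ℝ → Prop
  | nil : Alt []
  | one (a : ℝ) : Alt [a]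
  | two (a b : ℝ) (h : a ≠ b) : Alt [a, b]
  | up (a b c : ℝ) (r : List ℝ) (h1 : a < b) (h2 : c < a) (h : Alt (b :: c :: r)) :
      Alt (a :: b :: c :: r)
  | down (a b c : ℝ) (r : List ℝ) (h1 : b < a) (h2 : a < c) (h : Alt (b :: c :: r)) :
      Alt (a :: b :: c :: r)

lemma main_lemma : ∀ (l : List ℝ) (a lo hi : ℝ), lo ≤ a → a ≤ hi → ExtP lo hi l →
    Alt (collapse (a :: l))
  | [], a, _, _, _, _, _ => by rw [collapse_one]; exact Alt.one a
  | [b], a, lo, hi, hla, hah, hE => by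
    have hb : b < lo ∨ hi < b := hE.1
    have hab : a ≠ b := by rcases hb with h | h <;> intro e <;> subst e <;> linarith
    rw [collapse_two]; exact Alt.two a b hab
  | b :: c :: t', a, lo, hi, hla, hah, hE => by
    have hb : b < lo ∨ hi < b := hE.1
    have hE2 : ExtP (min lo b) (max hi b) (c :: t') := hE.2
    have hc : c < min lo b ∨ max hi b < c := hE2.1
    have hab : a ≠ b := by rcases hb with h | h <;> intro e <;> subst e <;> linarith
    have hca : (c < a ∧ c < b) ∨ (a < c ∧ b < c) := by
      rcases hc with h | h
      · exact Or.inl ⟨lt_of_lt_of_le h (le_trans (min_le_left _ _) hla),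
          lt_of_lt_of_le h (min_le_right _ _)⟩
      · exact Or.inr ⟨lt_of_le_of_lt (le_trans hah (le_max_left _ _)) h,
          lt_of_le_of_lt (le_max_right _ _) h⟩
    rw [collapse_cons]
    by_cases hm : (a < b ∧ b < c) ∨ (c < b ∧ b < a)
    · simp only [if_pos hm]
      exact main_lemma (c :: t') a (min lo b) (max hi b)
        (le_trans (min_le_left _ _) hla) (le_trans hah (le_max_left _ _)) hE2
    · simp only [if_neg hm]
      have hAlt : Alt (collapse (b :: c :: t')) :=
        main_lemma (c :: t') b (min lo b) (max hi b) (min_le_right _ _) (le_max_right _ _) hE2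
      obtain ⟨d, t, heq, hd1, hd2⟩ := collapse_second t' b c
      rw [heq] at hAlt ⊢
      rcases lt_or_gt_of_ne hab with hlt | hgt
      · have hcb : c < a ∧ c < b := by
          rcases hca with h | h
          · exact h
          · exact absurd (Or.inl ⟨hlt, h.2⟩) hm
        have hdc : d ≤ c := hd1 hcb.2.le
        exact Alt.up a b d t hlt (lt_of_le_of_lt hdc hcb.1) hAlt
      · have hcb : a < c ∧ b < c := by
          rcases hca with h | h
          · exact absurd (Or.inr ⟨h.2, hgt⟩) hm
          · exact h
        have hcd : c ≤ d := hd2 hcb.2.le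
        exact Alt.down a b d t hgt (lt_of_lt_of_le hcb.1 hcd) hAlt
termination_by l => l.length
decreasing_by all_goals simp

lemma alt_grow (p : List ℝ) : Alt (grow p) := by
  cases p with
  | nil => exact Alt.nil
  | cons x xs =>
    rw [grow]
    exact main_lemma _ x x x le_rfl le_rfl (ext_growAux xs x x)

lemma alt_tail {l : List ℝ} (h : Alt l) : Alt l.tail := by
  cases h with
  | nil => exact Alt.nil
  | one a => exact Alt.nil
  | two a b _ => exact Alt.one b
  | up a b c r h1 h2 h => exact h
  | down a b c r h1 h2 h => exact h

lemma alt_drop' {l : List ℝ} (h : Alt l) : ∀ i, Alt (l.drop i) := by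
  intro i
  induction i with
  | zero => simpa using h
  | succ n ih =>
    rw [← List.tail_drop]
    exact alt_tail ih

lemma alt_ne {a b : ℝ} {r : List ℝ} (h : Alt (a :: b :: r)) : a ≠ b := by
  cases h with
  | two _ _ h => exact h
  | up _ _ _ _ h1 _ _ => exact ne_of_lt h1
  | down _ _ _ _ h1 _ _ => exact (ne_of_lt h1).symm

lemma alt_triple {a b c : ℝ} {r : List ℝ} (h : Alt (a :: b :: c :: r)) :
    (a < b → c < a) ∧ (b < a → a < c) := by
  cases h with
  | up _ _ _ _ h1 h2 _ => exact ⟨fun _ => h2, fun h => absurd h1 (lt_asymm h)⟩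
  | down _ _ _ _ h1 h2 _ => exact ⟨fun h => absurd h1 (lt_asymm h), fun _ => h2⟩

/-- In the growing curve, consecutive vertices alternate between local minima and maxima,
the subsequence of local maxima is strictly increasing, and the subsequence of local minima
is strictly decreasing. -/
theorem grow_alternates (p : List ℝ) :
    (∀ i, ∀ h : i + 1 < (grow p).length,
      (grow p).get ⟨i, by omega⟩ ≠ (grow p).get ⟨i + 1, h⟩) ∧
    (∀ i, ∀ h : i + 2 < (grow p).length,
      ((grow p).get ⟨i, by omega⟩ < (grow p).get ⟨i + 1, by omega⟩ →
        (grow p).get ⟨i + 2, h⟩ < (grow p).get ⟨i, by omega⟩) ∧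
      ((grow p).get ⟨i + 1, by omega⟩ < (grow p).get ⟨i, by omega⟩ →
        (grow p).get ⟨i, by omega⟩ < (grow p).get ⟨i + 2, h⟩)) := by
  have hAlt := alt_grow p
  constructor
  · intro i h
    have hd := alt_drop' hAlt i
    have hlen : 2 ≤ ((grow p).drop i).length := by
      rw [List.length_drop]; omega
    match e : (grow p).drop i, hlen with
    | a :: b :: r, _ =>
      rw [e] at hd
      have h0 : (grow p).get ⟨i, by omega⟩ = a := by
        have := List.getElem_drop (xs := grow p) (i := i) (j := 0) (h := by rw [e]; simp)
        simp [e] at this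
        simpa [List.get_eq_getElem] using this.symm
      have h1 : (grow p).get ⟨i + 1, h⟩ = b := by
        have := List.getElem_drop (xs := grow p) (i := i) (j := 1) (h := by rw [e]; simp)
        simp [e] at this
        simpa [List.get_eq_getElem] using this.symm
      rw [h0, h1]
      exact alt_ne hd
  · intro i h
    have hd := alt_drop' hAlt i
    have hlen : 3 ≤ ((grow p).drop i).length := by
      rw [List.length_drop]; omega
    match e : (grow p).drop i, hlen with
    | a :: b :: c :: r, _ =>
      rw [e] at hd
      have h0 : (grow p).get ⟨i, by omega⟩ = a := by
        have := List.getElem_drop (xs := grow p) (i := i) (j := 0) (h := by rw [e]; simp)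
        simp [e] at this
        simpa [List.get_eq_getElem] using this.symm
      have h1 : (grow p).get ⟨i + 1, by omega⟩ = b := by
        have := List.getElem_drop (xs := grow p) (i := i) (j := 1) (h := by rw [e]; simp)
        simp [e] at this
        simpa [List.get_eq_getElem] using this.symm
      have h2 : (grow p).get ⟨i + 2, h⟩ = c := by
        have := List.getElem_drop (xs := grow p) (i := i) (j := 2) (h := by rw [e]; simp)
        simp [e] at this
        simpa [List.get_eq_getElem] using this.symm
      rw [h0, h1, h2]
      exact alt_triple hd
end
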